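/- Let x₁, y₁, x₂, y₂ ∈ ℝ with z₁ := x₁ + i·y₁ ≠ z₂ := x₂ + i·y₂, and set ζⱼ := xⱼ·e₁ + yⱼ·e₂ ∈ 𝔹 and ρ := 2e₁ + 2i·e₂. Then ζ₁ − ζ₂ is invertible in 𝔹 and (ζ₁ − ζ₂)⁻¹ = (z₁ − z₂)⁻¹·e₁ + (i·(y₁ − y₂)/(2(z₁ − z₂)²))·ρ. Moreover, for every c ∈ ℂ one has Re(c)·e₁ + Im(c)·e₂ = c·e₁ − (i·Im(c)/2)·ρ. -/

import Mathlib

/-- The biharmonic algebra `𝔹`, realized as the dual numbers over `ℂ`. -/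
noncomputable abbrev 𝔹 : Type := DualNumber ℂ

/-- The basis element `e₁ = 1` of the biharmonic algebra. -/
noncomputable def e₁ : 𝔹 := 1

/-- The basis element `e₂ = i + ε` of the biharmonic algebra. -/
noncomputable def e₂ : 𝔹 := Complex.I • 1 + DualNumber.eps

/-- The nilpotent element `ρ = 2e₁ + 2i·e₂` of the biharmonic algebra. -/
noncomputable def ρ : 𝔹 := (2 : ℂ) • e₁ + (2 * Complex.I) • e₂


lemma rho_eq : ρ = (2 * Complex.I) • (DualNumber.eps : 𝔹) := by
  ext
  · simp [ρ, e₁, e₂]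
    linear_combination (2 : ℂ) * Complex.I_sq
  · simp [ρ, e₁, e₂]

/-- For `ζⱼ = xⱼ·e₁ + yⱼ·e₂` with `z₁ = x₁ + i y₁ ≠ z₂ = x₂ + i y₂`, the element
`ζ₁ − ζ₂` is invertible in `𝔹` with inverse
`(z₁ − z₂)⁻¹·e₁ + (i·(y₁ − y₂)/(2(z₁ − z₂)²))·ρ`; moreover for every `c ∈ ℂ`,
`Re(c)·e₁ + Im(c)·e₂ = c·e₁ − (i·Im(c)/2)·ρ`. -/
theorem biharmonic_inverse_formula
    (x₁ y₁ x₂ y₂ : ℝ)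
    (z₁ z₂ : ℂ) (hz₁ : z₁ = (x₁ : ℂ) + Complex.I * (y₁ : ℂ))
    (hz₂ : z₂ = (x₂ : ℂ) + Complex.I * (y₂ : ℂ)) (hne : z₁ ≠ z₂)
    (ζ₁ ζ₂ : 𝔹)
    (hζ₁ : ζ₁ = (x₁ : ℂ) • e₁ + (y₁ : ℂ) • e₂)
    (hζ₂ : ζ₂ = (x₂ : ℂ) • e₁ + (y₂ : ℂ) • e₂) :
    (IsUnit (ζ₁ - ζ₂) ∧
      Ring.inverse (ζ₁ - ζ₂) =
        (z₁ - z₂)⁻¹ • e₁ + (Complex.I * ((y₁ : ℂ) - (y₂ : ℂ)) / (2 * (z₁ - z₂) ^ 2)) • ρ) ∧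
    ∀ c : ℂ, (c.re : ℂ) • e₁ + (c.im : ℂ) • e₂ = c • e₁ - (Complex.I * (c.im : ℂ) / 2) • ρ := by
  have hz : z₁ - z₂ ≠ 0 := sub_ne_zero.mpr hne
  set u : 𝔹 := (z₁ - z₂)⁻¹ • e₁ + (Complex.I * ((y₁ : ℂ) - (y₂ : ℂ)) / (2 * (z₁ - z₂) ^ 2)) • ρ with hu
  have hf : (ζ₁ - ζ₂).fst = z₁ - z₂ := by
    simp [hζ₁, hζ₂, hz₁, hz₂, e₁, e₂, -Complex.coe_smul]; ring
  have hs : (ζ₁ - ζ₂).snd = (y₁ : ℂ) - (y₂ : ℂ) := by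
    simp [hζ₁, hζ₂, e₁, e₂, -Complex.coe_smul]
  have huf : u.fst = (z₁ - z₂)⁻¹ := by
    simp [hu, e₁, rho_eq]
  have hus : u.snd = -((y₁ : ℂ) - (y₂ : ℂ)) / (z₁ - z₂) ^ 2 := by
    simp [hu, e₁, rho_eq, smul_eq_mul]
    field_simp
    linear_combination (((y₁:ℂ) - y₂)) * Complex.I_sq
  have hmul : (ζ₁ - ζ₂) * u = 1 := by
    ext
    · rw [TrivSqZeroExt.fst_mul, hf, huf]
      simp [mul_inv_cancel₀ hz]
    · rw [TrivSqZeroExt.snd_mul, hf, hs, huf, hus]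
      simp [smul_eq_mul]
      field_simp
      ring
  have hU : IsUnit (ζ₁ - ζ₂) := IsUnit.of_mul_eq_one _ hmul
  refine ⟨⟨hU, ?_⟩, ?_⟩
  · have := Ring.inverse_unit (Units.mkOfMulEqOne _ _ hmul)
    rw [Units.val_mkOfMulEqOne] at this
    rw [this]
    rfl
  · intro c
    ext
    · simp [e₁, e₂, rho_eq, Complex.ext_iff, -Complex.coe_smul]
    · simp [e₁, e₂, rho_eq, smul_eq_mul, -Complex.coe_smul]
      linear_combination ((c.im:ℂ)) * Complex.I_sq
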